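/- arXiv:2106.06610 — 6 statements merged into one kernel-verified Lean document; each statement's English description precedes it below -/
import Mathlib

section
/- If f : (ℝ^d)^n → ℝ is invariant under the simultaneous action of the orthogonal group O(d) on each of its n vector arguments (i.e., f(Qv₁,...,Qvₙ) = f(v₁,...,vₙ) for all Q ∈ O(d)), then there exists a function g : ℝ^(n×n) → ℝ such that f(v₁,...,vₙ) = g(⟨vᵢ, vⱼ⟩)_{i,j=1}^n, i.e., f factors through the Gram matrix of its inputs. -/
open scoped RealInnerProductSpace

noncomputable section

lemma exists_isometry_of_gram {d n : ℕ} (v w : Fin n → EuclideanSpace ℝ (Fin d))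
    (h : ∀ i j, ⟪v i, v j⟫ = ⟪w i, w j⟫) :
    ∃ L : EuclideanSpace ℝ (Fin d) →ₗᵢ[ℝ] EuclideanSpace ℝ (Fin d), ∀ i, L (v i) = w i := by
  classical
  set T : (Fin n → ℝ) →ₗ[ℝ] EuclideanSpace ℝ (Fin d) := Fintype.linearCombination ℝ v with hT
  set S : (Fin n → ℝ) →ₗ[ℝ] EuclideanSpace ℝ (Fin d) := Fintype.linearCombination ℝ w with hS
  have hTS : ∀ c c' : Fin n → ℝ, ⟪T c, T c'⟫ = ⟪S c, S c'⟫ := by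
    intro c c'
    simp only [hT, hS, Fintype.linearCombination_apply, sum_inner, inner_sum,
      real_inner_smul_left, real_inner_smul_right]
    exact Finset.sum_congr rfl fun i _ => Finset.sum_congr rfl fun j _ => by rw [h j i]
  have hker : LinearMap.ker T ≤ LinearMap.ker S := by
    intro c hc
    rw [LinearMap.mem_ker] at hc ⊢
    have : ⟪S c, S c⟫ = 0 := by rw [← hTS, hc, inner_zero_left]
    exact inner_self_eq_zero.mp this
  set qe := T.quotKerEquivRange
  set L₀ : ↥(LinearMap.range T) →ₗ[ℝ] EuclideanSpace ℝ (Fin d) :=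
    ((LinearMap.ker T).liftQ S hker) ∘ₗ (qe.symm : _ →ₗ[ℝ] _)
  have key : ∀ c : Fin n → ℝ, ∀ hx : T c ∈ LinearMap.range T, L₀ ⟨T c, hx⟩ = S c := by
    intro c hx
    have hq : qe (Submodule.Quotient.mk c) = ⟨T c, hx⟩ := by
      apply Subtype.ext
      simp [qe, LinearMap.quotKerEquivRange]
    have : qe.symm ⟨T c, hx⟩ = Submodule.Quotient.mk c := by
      rw [← hq, LinearEquiv.symm_apply_apply]
    simp [L₀, this, Submodule.liftQ_apply]
  have hnorm : ∀ x : ↥(LinearMap.range T), ‖L₀ x‖ = ‖x‖ := by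
    rintro ⟨x, hx⟩
    obtain ⟨c, rfl⟩ := hx
    rw [key c ⟨c, rfl⟩]
    have h1 : ⟪S c, S c⟫ = ⟪T c, T c⟫ := (hTS c c).symm
    have := congrArg Real.sqrt h1
    rwa [real_inner_self_eq_norm_sq, real_inner_self_eq_norm_sq, Real.sqrt_sq (norm_nonneg _),
      Real.sqrt_sq (norm_nonneg _)] at this
  set L₁ : ↥(LinearMap.range T) →ₗᵢ[ℝ] EuclideanSpace ℝ (Fin d) := ⟨L₀, hnorm⟩
  refine ⟨L₁.extend, fun i => ?_⟩
  have hv : v i = T (Pi.single i 1) := by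
    simp [hT, Fintype.linearCombination_apply, Pi.single_apply]
  have hw : w i = S (Pi.single i 1) := by
    simp [hS, Fintype.linearCombination_apply, Pi.single_apply]
  have hmem : v i ∈ LinearMap.range T := ⟨Pi.single i 1, hv.symm⟩
  have := LinearIsometry.extend_apply L₁ ⟨v i, hmem⟩
  rw [this]
  show L₀ ⟨v i, hmem⟩ = w i
  rw [hw]
  have hmem' : T (Pi.single i 1) ∈ LinearMap.range T := ⟨_, rfl⟩
  have : (⟨v i, hmem⟩ : ↥(LinearMap.range T)) = ⟨T (Pi.single i 1), hmem'⟩ := by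
    apply Subtype.ext; exact hv
  rw [this, key]

end

/-- An O(d)-invariant scalar function of n vectors factors through
the Gram matrix of its inputs. -/
theorem od_invariant_factors_through_gram (d n : ℕ)
    (f : (Fin n → Fin d → ℝ) → ℝ)
    (hf : ∀ Q : Matrix (Fin d) (Fin d) ℝ, Q ∈ Matrix.orthogonalGroup (Fin d) ℝ →
      ∀ v : Fin n → Fin d → ℝ, f (fun i => Q.mulVec (v i)) = f v) :
    ∃ g : Matrix (Fin n) (Fin n) ℝ → ℝ,
      ∀ v : Fin n → Fin d → ℝ,
        f v = g (Matrix.of fun i j => dotProduct (v i) (v j)) := by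
  classical
  set Gram : (Fin n → Fin d → ℝ) → Matrix (Fin n) (Fin n) ℝ :=
    fun v => Matrix.of fun i j => dotProduct (v i) (v j) with hGram
  refine ⟨fun M => if h : ∃ v, Gram v = M then f h.choose else 0, fun v => ?_⟩
  have hex : ∃ u, Gram u = Gram v := ⟨v, rfl⟩
  show f v = if h : ∃ u, Gram u = Gram v then f h.choose else 0
  rw [dif_pos hex]
  set w := hex.choose with hw
  have hgram : Gram w = Gram v := hex.choose_spec
  -- view as EuclideanSpace vectors
  set e := WithLp.linearEquiv 2 ℝ (Fin d → ℝ)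
  set v' : Fin n → EuclideanSpace ℝ (Fin d) := fun i => e.symm (v i)
  set w' : Fin n → EuclideanSpace ℝ (Fin d) := fun i => e.symm (w i)
  have hinner : ∀ i j, ⟪v' i, v' j⟫ = ⟪w' i, w' j⟫ := by
    intro i j
    have : dotProduct (v i) (v j) = dotProduct (w i) (w j) :=
      (congrFun (congrFun (congrArg (fun M => (M : Matrix (Fin n) (Fin n) ℝ)) hgram) i) j).symm
    simpa [PiLp.inner_apply, RCLike.inner_apply, dotProduct, v', w', e,
      mul_comm] using this
  obtain ⟨L, hL⟩ := exists_isometry_of_gram v' w' hinner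
  set M : (Fin d → ℝ) →ₗ[ℝ] (Fin d → ℝ) :=
    (e : EuclideanSpace ℝ (Fin d) →ₗ[ℝ] (Fin d → ℝ)) ∘ₗ L.toLinearMap ∘ₗ (e.symm : _ →ₗ[ℝ] _)
  set Q := LinearMap.toMatrix' M with hQ
  have hmul : ∀ x : Fin d → ℝ, Q.mulVec x = M x := by
    intro x
    rw [← Matrix.toLin'_apply, hQ, Matrix.toLin'_toMatrix']
  have hQmem : Q ∈ Matrix.orthogonalGroup (Fin d) ℝ := by
    rw [Matrix.mem_unitaryGroup_iff']
    ext i j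
    have h1 : ∀ k l, Q k l = (L (e.symm (Pi.single l 1)) : EuclideanSpace ℝ (Fin d)) k := by
      intro k l
      have h0 : Q k l = Q.mulVec (Pi.single l 1) k := by
        simp [Matrix.mulVec_single]
      rw [h0, hmul]
      simp [M, e]
    have h2 : ⟪L (e.symm (Pi.single i 1)), L (e.symm (Pi.single j 1))⟫
        = ⟪(e.symm (Pi.single i 1) : EuclideanSpace ℝ (Fin d)), e.symm (Pi.single j 1)⟫ :=
      L.inner_map_map _ _
    have h2' : ∑ k, (L (e.symm (Pi.single i 1)) : EuclideanSpace ℝ (Fin d)) k *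
        (L (e.symm (Pi.single j 1)) : EuclideanSpace ℝ (Fin d)) k
        = ∑ k, (e.symm (Pi.single i 1) : EuclideanSpace ℝ (Fin d)) k *
          (e.symm (Pi.single j 1) : EuclideanSpace ℝ (Fin d)) k := by
      have h2' := h2
      simp only [PiLp.inner_apply, RCLike.inner_apply, starRingEnd_apply, star_trivial] at h2'
      simpa only [mul_comm] using h2'
    simp only [Matrix.mul_apply, Matrix.star_apply, star_trivial]
    have h3 : ∑ k, Q k i * Q k j = ∑ k, (L (e.symm (Pi.single i 1)) : EuclideanSpace ℝ (Fin d)) k *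
        (L (e.symm (Pi.single j 1)) : EuclideanSpace ℝ (Fin d)) k :=
      Finset.sum_congr rfl fun k _ => by rw [h1 k i, h1 k j]
    rw [h3, h2']
    simp [e, Pi.single_apply, Matrix.one_apply, eq_comm]
  have hQv : (fun i => Q.mulVec (v i)) = w := by
    funext i
    rw [hmul]
    have : M (v i) = e (L (v' i)) := by simp [M, v']
    rw [this, hL i]
    simp [w', e]
  calc f v = f (fun i => Q.mulVec (v i)) := (hf Q hQmem v).symm
    _ = f w := by rw [hQv]
end

section
/- Let h : (ℝ^d)^n → ℝ^d be O(d)-equivariant, i.e., h(Qv₁,...,Qvₙ) = Q·h(v₁,...,vₙ) for all Q ∈ O(d). Then for every tuple (v₁,...,vₙ), the vector h(v₁,...,vₙ) lies in the linear span of {v₁,...,vₙ}. -/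
set_option maxHeartbeats 1000000 in
/-- An O(d)-equivariant vector function of n vectors takes values in the
linear span of its inputs. -/
theorem od_equivariant_mem_span (d n : ℕ)
    (h : (Fin n → Fin d → ℝ) → Fin d → ℝ)
    (hh : ∀ Q : Matrix (Fin d) (Fin d) ℝ, Q ∈ Matrix.orthogonalGroup (Fin d) ℝ →
      ∀ v : Fin n → Fin d → ℝ, h (fun i => Q.mulVec (v i)) = Q.mulVec (h v)) :
    ∀ v : Fin n → Fin d → ℝ, h v ∈ Submodule.span ℝ (Set.range v) := by
  intro v
  let K : Submodule ℝ (EuclideanSpace ℝ (Fin d)) :=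
    Submodule.span ℝ (Set.range (fun i => WithLp.toLp 2 (v i) : Fin n → EuclideanSpace ℝ (Fin d)))
  let R : EuclideanSpace ℝ (Fin d) ≃ₗᵢ[ℝ] EuclideanSpace ℝ (Fin d) := Submodule.reflection K
  let L : (Fin d → ℝ) →ₗ[ℝ] (Fin d → ℝ) := (WithLp.linearEquiv 2 ℝ (Fin d → ℝ)).toLinearMap ∘ₗ
    R.toLinearEquiv.toLinearMap ∘ₗ (WithLp.linearEquiv 2 ℝ (Fin d → ℝ)).symm.toLinearMap
  let Q : Matrix (Fin d) (Fin d) ℝ := LinearMap.toMatrix' L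
  have hQmul : ∀ x : Fin d → ℝ, Q.mulVec x = (R (WithLp.toLp 2 x)).ofLp := by
    intro x
    have := Matrix.toLin'_toMatrix' L
    calc Q.mulVec x = Matrix.toLin' Q x := (Matrix.toLin'_apply Q x).symm
      _ = L x := by rw [this]
      _ = (R (WithLp.toLp 2 x)).ofLp := rfl
  have hQorth : Q ∈ Matrix.orthogonalGroup (Fin d) ℝ := by
    rw [Matrix.mem_orthogonalGroup_iff']
    ext i j
    have hcol : ∀ (j : Fin d) (k : Fin d), Q k j = (R (EuclideanSpace.single j 1)) k := by
      intro j k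
      have : Q.mulVec (Pi.single j 1) = (R (EuclideanSpace.single j 1)).ofLp := hQmul _
      have hk := congrFun this k
      rw [Matrix.mulVec_single] at hk
      simpa using hk
    have hinner := R.inner_map_map (EuclideanSpace.single i (1:ℝ))
      (EuclideanSpace.single j (1:ℝ))
    rw [EuclideanSpace.inner_single_left, EuclideanSpace.single_apply] at hinner
    simp only [PiLp.inner_apply, RCLike.inner_apply, conj_trivial, map_one, one_mul] at hinner
    have : (Q.transpose * Q) i j = ∑ k, Q k i * Q k j := by
      simp [Matrix.mul_apply, Matrix.star_eq_conjTranspose, Matrix.conjTranspose_apply, Matrix.transpose_apply,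
        mul_comm]
    rw [this]
    simp_rw [fun k => hcol i k, fun k => hcol j k]
    have hinner' : ∑ x, (R (EuclideanSpace.single i 1)).ofLp x * (R (EuclideanSpace.single j 1)).ofLp x =
        if i = j then 1 else 0 := by
      rw [← hinner]; exact Finset.sum_congr rfl fun x _ => mul_comm _ _
    rw [hinner']
    simp [Matrix.one_apply, eq_comm]
  have hvK : ∀ i, (WithLp.toLp 2 (v i) : EuclideanSpace ℝ (Fin d)) ∈ K := fun i =>
    Submodule.subset_span ⟨i, rfl⟩
  have hfix : (fun i => Q.mulVec (v i)) = v := by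
    funext i
    exact (hQmul (v i)).trans (congrArg WithLp.ofLp (Submodule.reflection_mem_subspace_eq_self (K := K) (hvK i)))
  have key : WithLp.toLp 2 (h v) = R (WithLp.toLp 2 (h v)) := by
    have := hh Q hQorth v
    rw [hfix, hQmul] at this
    exact congrArg (WithLp.toLp 2) this
  have hK : WithLp.toLp 2 (h v) ∈ K := by
    rw [← Submodule.reflection_eq_self_iff (K := K) (WithLp.toLp 2 (h v))]
    exact key.symm
  obtain ⟨c, hc⟩ := (Submodule.mem_span_range_iff_exists_fun (R := ℝ)).1 hK
  refine (Submodule.mem_span_range_iff_exists_fun (R := ℝ)).2 ⟨c, ?_⟩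
  funext k
  have h2 := congrFun (congrArg WithLp.ofLp hc) k
  simp only [WithLp.ofLp_sum, WithLp.ofLp_smul, Finset.sum_apply, Pi.smul_apply, PiLp.smul_apply, smul_eq_mul] at h2 ⊢
  exact h2
end

section
/- Let h : (ℝ^d)^n → ℝ^d be O(d)-equivariant. Then there exist n O(d)-invariant scalar functions f₁,...,fₙ : (ℝ^d)^n → ℝ such that h(v₁,...,vₙ) = Σ_{t=1}^n fₜ(v₁,...,vₙ) · vₜ for all inputs. -/
open Matrix RealInnerProductSpace in
lemma od_span_lemma (d n : ℕ)
    (h : (Fin n → Fin d → ℝ) → Fin d → ℝ)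
    (hh : ∀ Q : Matrix (Fin d) (Fin d) ℝ, Q ∈ Matrix.orthogonalGroup (Fin d) ℝ →
      ∀ v : Fin n → Fin d → ℝ, h (fun i => Q.mulVec (v i)) = Q.mulVec (h v))
    (w : Fin n → Fin d → ℝ) :
    ∃ c : Fin n → ℝ, h w = ∑ t, c t • w t := by
  classical
  set eS : (Fin d → ℝ) → EuclideanSpace ℝ (Fin d) := ⇑(WithLp.equiv 2 (Fin d → ℝ)).symm with heS
  set W : Submodule ℝ (EuclideanSpace ℝ (Fin d)) :=
    Submodule.span ℝ (Set.range fun i => eS (w i)) with hW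
  set R := (W.reflection : EuclideanSpace ℝ (Fin d) ≃ₗᵢ[ℝ] EuclideanSpace ℝ (Fin d)) with hR
  set Q : Matrix (Fin d) (Fin d) ℝ :=
    Matrix.toEuclideanLin.symm (R.toLinearEquiv.toLinearMap) with hQdef
  have hQlin : Matrix.toEuclideanLin Q = R.toLinearEquiv.toLinearMap :=
    LinearEquiv.apply_symm_apply _ _
  have hQapp : ∀ x : Fin d → ℝ, Q *ᵥ x = WithLp.equiv 2 (Fin d → ℝ) (R (eS x)) := by
    intro x
    have h1 : WithLp.equiv 2 (Fin d → ℝ) (Matrix.toEuclideanLin Q (eS x))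
        = Q *ᵥ (WithLp.equiv 2 (Fin d → ℝ) (eS x)) :=
      Matrix.ofLp_toEuclideanLin_apply Q (eS x)
    rw [hQlin] at h1
    simpa [heS] using h1.symm
  -- R is self-adjoint
  have hsa : ∀ u v : EuclideanSpace ℝ (Fin d), ⟪R u, v⟫ = ⟪u, R v⟫ := by
    intro u v
    simp only [hR, Submodule.reflection_apply, two_smul, inner_add_left, inner_sub_left,
      inner_add_right, inner_sub_right,
      Submodule.inner_starProjection_left_eq_right]
  -- Q * Q = 1
  have hQQ : Q * Q = 1 := by
    have hv : ∀ x : Fin d → ℝ, (Q * Q) *ᵥ x = x := by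
      intro x
      rw [← Matrix.mulVec_mulVec, hQapp, hQapp]
      simp only [heS, Equiv.symm_apply_apply, hR, Submodule.reflection_reflection,
        Equiv.apply_symm_apply]
    apply Matrix.toLin'.injective
    apply LinearMap.ext
    intro x
    rw [Matrix.toLin'_apply, hv x]
    simp
  -- Q is symmetric
  have hentry : ∀ i j, Q i j = ⟪R (EuclideanSpace.single j (1:ℝ)), EuclideanSpace.single i (1:ℝ)⟫ := by
    intro i j
    have h1 : Q *ᵥ Pi.single j 1 = fun i => Q i j * 1 := Matrix.mulVec_single Q j 1
    have h2 := congrFun h1 i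
    rw [hQapp] at h2
    have h3 : eS (Pi.single j 1) = EuclideanSpace.single j (1:ℝ) := rfl
    rw [EuclideanSpace.inner_single_right]
    simp only [mul_one] at h2 ⊢
    rw [← h2, h3]
    simp [starRingEnd_apply]
  have hsym : star Q = Q := by
    ext i j
    have : (star Q) i j = Q j i := rfl
    rw [this, hentry i j, hentry j i, hsa, real_inner_comm]
  have hQmem : Q ∈ Matrix.orthogonalGroup (Fin d) ℝ := by
    rw [Matrix.mem_orthogonalGroup_iff']
    rw [← Matrix.conjTranspose_eq_transpose_of_trivial, ← Matrix.star_eq_conjTranspose, hsym]; exact hQQ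
  -- Q fixes each w i
  have hfix : (fun i => Q *ᵥ w i) = w := by
    funext i
    rw [hQapp]
    have hmem : eS (w i) ∈ W := Submodule.subset_span ⟨i, rfl⟩
    rw [hR, Submodule.reflection_mem_subspace_eq_self hmem]
    exact (WithLp.equiv 2 (Fin d → ℝ)).apply_symm_apply _
  have hfixh : h w = Q *ᵥ h w := by
    have := hh Q hQmem w
    rwa [hfix] at this
  have hmemW : eS (h w) ∈ W := by
    rw [← Submodule.reflection_eq_self_iff (K := W), ← hR]
    have := hfixh
    rw [hQapp] at this
    have h2 := congrArg eS this
    rw [heS] at h2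
    rw [Equiv.symm_apply_apply] at h2
    exact h2.symm
  rw [hW, Submodule.mem_span_range_iff_exists_fun] at hmemW
  obtain ⟨c, hc⟩ := hmemW
  refine ⟨c, ?_⟩
  have h2 := congrArg (WithLp.linearEquiv 2 ℝ (Fin d → ℝ)) hc
  rw [map_sum] at h2
  simp only [_root_.map_smul] at h2
  have h3 : ∀ x : Fin d → ℝ, (WithLp.linearEquiv 2 ℝ (Fin d → ℝ)) (eS x) = x := fun x => rfl
  simp only [h3] at h2
  exact h2.symm

/-- An O(d)-equivariant vector function can be written as a linear
combination of the inputs with O(d)-invariant scalar coefficient functions. -/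
theorem od_equivariant_eq_invariant_combination (d n : ℕ)
    (h : (Fin n → Fin d → ℝ) → Fin d → ℝ)
    (hh : ∀ Q : Matrix (Fin d) (Fin d) ℝ, Q ∈ Matrix.orthogonalGroup (Fin d) ℝ →
      ∀ v : Fin n → Fin d → ℝ, h (fun i => Q.mulVec (v i)) = Q.mulVec (h v)) :
    ∃ f : Fin n → ((Fin n → Fin d → ℝ) → ℝ),
      (∀ t, ∀ Q : Matrix (Fin d) (Fin d) ℝ, Q ∈ Matrix.orthogonalGroup (Fin d) ℝ →
        ∀ v : Fin n → Fin d → ℝ, f t (fun i => Q.mulVec (v i)) = f t v) ∧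
      ∀ v : Fin n → Fin d → ℝ, h v = ∑ t, f t v • v t := by
  classical
  let r : (Fin n → Fin d → ℝ) → (Fin n → Fin d → ℝ) → Prop :=
    fun v w => ∃ Q ∈ Matrix.orthogonalGroup (Fin d) ℝ, (fun i => Q.mulVec (w i)) = v
  have hrefl : ∀ v, r v v := fun v => ⟨1, one_mem _, by funext i; simp⟩
  have hsymm : ∀ {v w}, r v w → r w v := by
    rintro v w ⟨Q, hQ, rfl⟩
    refine ⟨star Q, ?_, ?_⟩
    · rw [Matrix.mem_orthogonalGroup_iff (Fin d) ℝ, Matrix.star_eq_conjTranspose, Matrix.conjTranspose_eq_transpose_of_trivial, Matrix.transpose_transpose]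
      exact Iff.mp (Matrix.mem_orthogonalGroup_iff' (Fin d) ℝ) hQ
    · funext i
      rw [Matrix.mulVec_mulVec, Matrix.star_eq_conjTranspose, Matrix.conjTranspose_eq_transpose_of_trivial, Iff.mp (Matrix.mem_orthogonalGroup_iff' (Fin d) ℝ) hQ, Matrix.one_mulVec]
  have htrans : ∀ {u v w}, r u v → r v w → r u w := by
    rintro u v w ⟨Q, hQ, rfl⟩ ⟨Q2, hQ2, rfl⟩
    exact ⟨Q * Q2, mul_mem hQ hQ2, by funext i; rw [← Matrix.mulVec_mulVec]⟩
  let s : Setoid (Fin n → Fin d → ℝ) := ⟨r, ⟨hrefl, fun a => hsymm a, fun a b => htrans a b⟩⟩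
  let rep : (Fin n → Fin d → ℝ) → (Fin n → Fin d → ℝ) :=
    fun v => Quotient.out (Quotient.mk s v)
  have hrep_inv : ∀ (Q : Matrix (Fin d) (Fin d) ℝ), Q ∈ Matrix.orthogonalGroup (Fin d) ℝ →
      ∀ v, rep (fun i => Q.mulVec (v i)) = rep v := by
    intro Q hQ v
    have : Quotient.mk s (fun i => Q.mulVec (v i)) = Quotient.mk s v :=
      Quotient.sound ⟨Q, hQ, rfl⟩
    simp only [rep, this]
  have hrep_rel : ∀ v, r (rep v) v := fun v => Quotient.mk_out (s := s) v
  let c : (Fin n → Fin d → ℝ) → Fin n → ℝ :=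
    fun v => Classical.choose (od_span_lemma d n h hh v)
  have hc : ∀ v, h v = ∑ t, c v t • v t := fun v =>
    Classical.choose_spec (od_span_lemma d n h hh v)
  refine ⟨fun t v => c (rep v) t, ?_, ?_⟩
  · intro t Q hQ v
    show c (rep fun i => Q.mulVec (v i)) t = c (rep v) t
    rw [hrep_inv Q hQ v]
  · intro v
    obtain ⟨Q, hQ, hQv⟩ := hsymm (hrep_rel v)
    have h1 : h v = Q.mulVec (h (rep v)) := by
      have := hh Q hQ (rep v)
      rwa [hQv] at this
    rw [h1, hc (rep v)]
    have h2 : Q.mulVec (∑ t, c (rep v) t • rep v t) = ∑ t, c (rep v) t • Q.mulVec (rep v t) := by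
      rw [show ∀ x : Fin d → ℝ, Q.mulVec x = Q.mulVecLin x from fun _ => rfl]
      rw [map_sum]
      simp only [_root_.map_smul]
      rfl
    rw [h2]
    refine Finset.sum_congr rfl fun t _ => ?_
    rw [congrFun hQv t]
end

section
/- Let h : (ℝ^d)^n → ℝ^d be SO(d)-equivariant, and suppose (v₁,...,vₙ) is a tuple such that dim span(v₁,...,vₙ) ≠ d-1. Then h(v₁,...,vₙ) ∈ span(v₁,...,vₙ). -/
open Matrix

section Aux

variable {d : ℕ}

private lemma mulVec_vecMulVec (x y z : Fin d → ℝ) :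
    (vecMulVec x y).mulVec z = (y ⬝ᵥ z) • x := by
  ext i
  simp [vecMulVec, mulVec, dotProduct, Finset.mul_sum, mul_assoc, mul_comm, mul_left_comm]

private lemma vecMulVec_mul_vecMulVec (x y z w : Fin d → ℝ) :
    (vecMulVec x y) * (vecMulVec z w) = (y ⬝ᵥ z) • vecMulVec x w := by
  ext i j
  simp [vecMulVec, Matrix.mul_apply, dotProduct, Finset.sum_mul, Finset.mul_sum,
    mul_assoc, mul_comm, mul_left_comm]

/-- Householder reflection. -/
private def reflM (x : Fin d → ℝ) : Matrix (Fin d) (Fin d) ℝ :=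
  1 - (2 : ℝ) • vecMulVec x x

private lemma reflM_transpose (x : Fin d → ℝ) : (reflM x)ᵀ = reflM x := by
  ext i j
  simp [reflM, vecMulVec, Matrix.one_apply, mul_comm]
  rcases eq_or_ne i j with rfl | hij
  · simp
  · simp [hij, Ne.symm hij]

private lemma reflM_mul_reflM_self (x : Fin d → ℝ) (hx : x ⬝ᵥ x = 1) :
    reflM x * reflM x = 1 := by
  simp only [reflM, sub_mul, mul_sub, one_mul, mul_one, Matrix.smul_mul, Matrix.mul_smul,
    vecMulVec_mul_vecMulVec, hx, one_smul, smul_smul]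
  module

private lemma reflM_det (x : Fin d → ℝ) (hx : x ⬝ᵥ x = 1) : (reflM x).det = -1 := by
  have heq : reflM x = 1 + Matrix.replicateCol (Fin 1) ((-2 : ℝ) • x) * Matrix.replicateRow (Fin 1) x := by
    erw [← Matrix.vecMulVec_eq (Fin 1)]
    ext i j
    simp [reflM, vecMulVec]
    ring
  rw [heq]
  erw [Matrix.det_one_add_replicateCol_mul_replicateRow]
  simp [hx]
  norm_num

private lemma reflM_mulVec (x z : Fin d → ℝ) :
    (reflM x).mulVec z = z - (2 * (x ⬝ᵥ z)) • x := by
  simp [reflM, Matrix.sub_mulVec, Matrix.smul_mulVec, mulVec_vecMulVec, smul_smul]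

private lemma reflM_mulVec_of_orth (x z : Fin d → ℝ) (hxz : x ⬝ᵥ z = 0) :
    (reflM x).mulVec z = z := by
  simp [reflM_mulVec, hxz]

private lemma inner_eq_dot (x y : EuclideanSpace ℝ (Fin d)) :
    (inner ℝ x y : ℝ) = (x : Fin d → ℝ) ⬝ᵥ (y : Fin d → ℝ) := by
  simp [PiLp.inner_apply, dotProduct, RCLike.inner_apply, mul_comm]

end Aux

/-- An SO(d)-equivariant vector function lies in the span of its inputs,
provided the inputs do not span a (d-1)-dimensional subspace. -/
theorem sod_equivariant_mem_span (d n : ℕ)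
    (h : (Fin n → Fin d → ℝ) → Fin d → ℝ)
    (hh : ∀ Q : Matrix (Fin d) (Fin d) ℝ,
      Q ∈ Matrix.orthogonalGroup (Fin d) ℝ → Q.det = 1 →
      ∀ v : Fin n → Fin d → ℝ, h (fun i => Q.mulVec (v i)) = Q.mulVec (h v)) :
    ∀ v : Fin n → Fin d → ℝ,
      Module.finrank ℝ (Submodule.span ℝ (Set.range v)) ≠ d - 1 →
      h v ∈ Submodule.span ℝ (Set.range v) := by
  intro v hrank
  set W : Submodule ℝ (EuclideanSpace ℝ (Fin d)) :=
    Submodule.span ℝ (Set.range (fun i => WithLp.toLp 2 (v i))) with hW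
  have hWm : W = (Submodule.span ℝ (Set.range v)).map
      ((WithLp.linearEquiv 2 ℝ (Fin d → ℝ)).symm : (Fin d → ℝ) →ₗ[ℝ] EuclideanSpace ℝ (Fin d)) := by
    rw [hW, Submodule.map_span, ← Set.range_comp]; rfl
  have hrank' : Module.finrank ℝ W ≠ d - 1 := by
    rw [hWm, LinearEquiv.finrank_map_eq]; exact hrank
  suffices hs : WithLp.toLp 2 (h v) ∈ W by
    rw [hWm] at hs
    obtain ⟨y, hy, hye⟩ := hs
    have hy' : y = h v := congrArg WithLp.ofLp hye
    rw [← hy']; exact hy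
  have hle : Module.finrank ℝ W ≤ d := by
    simpa [finrank_euclideanSpace_fin] using W.finrank_le
  by_cases htop : Module.finrank ℝ W = d
  · have hWtop : W = ⊤ := Submodule.eq_top_of_finrank_eq (by
      rw [finrank_euclideanSpace_fin]; exact htop)
    rw [hWtop]; exact Submodule.mem_top
  have hm : Module.finrank ℝ (Wᗮ) + Module.finrank ℝ W = d := by
    have := Submodule.finrank_add_finrank_orthogonal W
    rw [finrank_euclideanSpace_fin] at this
    omega
  have hm2 : 2 ≤ Module.finrank ℝ (Wᗮ) := by omega
  set a : EuclideanSpace ℝ (Fin d) := (W.orthogonalProjectionOnto (WithLp.toLp 2 (h v)) : EuclideanSpace ℝ (Fin d))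
    with ha
  set p : EuclideanSpace ℝ (Fin d) := (show EuclideanSpace ℝ (Fin d) from WithLp.toLp 2 (h v)) - a with hp
  have hpmem : p ∈ Wᗮ := by
    rw [hp]; exact Submodule.sub_starProjection_mem_orthogonal (K := W) (WithLp.toLp 2 (h v))
  suffices hps : p = 0 by
    have hva : WithLp.toLp 2 (h v) = a := by
      have := hp ▸ hps
      have := sub_eq_zero.mp this
      exact this
    rw [show WithLp.toLp 2 (h v) = a from hva]
    exact (W.orthogonalProjectionOnto (WithLp.toLp 2 (h v))).2
  by_contra hp0
  -- find w ∈ Wᗮ orthogonal to p, nonzero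
  have hfin : ∃ w : EuclideanSpace ℝ (Fin d), w ∈ Wᗮ ⊓ (ℝ ∙ p)ᗮ ∧ w ≠ 0 := by
    have h1 : Module.finrank ℝ ((ℝ ∙ p)ᗮ : Submodule ℝ (EuclideanSpace ℝ (Fin d))) + 1 = d := by
      have := Submodule.finrank_add_finrank_orthogonal (ℝ ∙ p : Submodule ℝ (EuclideanSpace ℝ (Fin d)))
      rw [finrank_euclideanSpace_fin, finrank_span_singleton hp0] at this
      omega
    have h2 := Submodule.finrank_sup_add_finrank_inf_eq (Wᗮ) ((ℝ ∙ p)ᗮ)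
    have h3 : Module.finrank ℝ ((Wᗮ ⊔ (ℝ ∙ p)ᗮ : Submodule ℝ (EuclideanSpace ℝ (Fin d)))) ≤ d := by
      simpa [finrank_euclideanSpace_fin] using
        (Wᗮ ⊔ (ℝ ∙ p)ᗮ : Submodule ℝ (EuclideanSpace ℝ (Fin d))).finrank_le
    have h4 : 0 < Module.finrank ℝ ((Wᗮ ⊓ (ℝ ∙ p)ᗮ : Submodule ℝ (EuclideanSpace ℝ (Fin d)))) := by
      omega
    obtain ⟨⟨w, hw⟩, hwne⟩ := Module.finrank_pos_iff_exists_ne_zero.mp h4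
    refine ⟨w, hw, fun hc => hwne ?_⟩
    exact Subtype.ext hc
  obtain ⟨w, ⟨hwW, hwp⟩, hw0⟩ := hfin
  set ph : EuclideanSpace ℝ (Fin d) := ‖p‖⁻¹ • p with hph
  set wh : EuclideanSpace ℝ (Fin d) := ‖w‖⁻¹ • w with hwh
  have hpne : ‖p‖ ≠ 0 := norm_ne_zero_iff.mpr hp0
  have hwne : ‖w‖ ≠ 0 := norm_ne_zero_iff.mpr hw0
  have hpn : (ph : Fin d → ℝ) ⬝ᵥ (ph : Fin d → ℝ) = 1 := by
    rw [← inner_eq_dot, hph, real_inner_smul_left, real_inner_smul_right,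
      real_inner_self_eq_norm_sq]
    field_simp
  have hwn : (wh : Fin d → ℝ) ⬝ᵥ (wh : Fin d → ℝ) = 1 := by
    rw [← inner_eq_dot, hwh, real_inner_smul_left, real_inner_smul_right,
      real_inner_self_eq_norm_sq]
    field_simp
  have hinner_wp : (inner ℝ w p : ℝ) = 0 := by
    rw [real_inner_comm]
    exact hwp p (Submodule.mem_span_singleton_self p)
  have hwpdot : (wh : Fin d → ℝ) ⬝ᵥ (p : Fin d → ℝ) = 0 := by
    rw [← inner_eq_dot, hwh, real_inner_smul_left, hinner_wp, mul_zero]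
  have hphW : ph ∈ Wᗮ := Submodule.smul_mem _ _ hpmem
  have hwhW : wh ∈ Wᗮ := Submodule.smul_mem _ _ hwW
  set Q : Matrix (Fin d) (Fin d) ℝ := reflM ph * reflM wh with hQ
  have hQorth : Q ∈ Matrix.orthogonalGroup (Fin d) ℝ := by
    rw [Matrix.mem_orthogonalGroup_iff]
    have hstar : star Q = reflM wh * reflM ph := by
      rw [hQ, Matrix.star_eq_conjTranspose, Matrix.conjTranspose_mul,
        Matrix.conjTranspose_eq_transpose_of_trivial, Matrix.conjTranspose_eq_transpose_of_trivial,
        reflM_transpose, reflM_transpose]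
    rw [← Matrix.conjTranspose_eq_transpose_of_trivial, ← Matrix.star_eq_conjTranspose, hstar, hQ, Matrix.mul_assoc, ← Matrix.mul_assoc (reflM wh),
      reflM_mul_reflM_self wh hwn, Matrix.one_mul, reflM_mul_reflM_self ph hpn]
  have hQdet : Q.det = 1 := by
    rw [hQ, Matrix.det_mul, reflM_det ph hpn, reflM_det wh hwn]; norm_num
  have hfix : ∀ x : EuclideanSpace ℝ (Fin d), x ∈ W → Q.mulVec x = x := by
    intro x hx
    have h1 : (wh : Fin d → ℝ) ⬝ᵥ (x : Fin d → ℝ) = 0 := by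
      rw [← inner_eq_dot, real_inner_comm]; exact hwhW x hx
    have h2 : (ph : Fin d → ℝ) ⬝ᵥ (x : Fin d → ℝ) = 0 := by
      rw [← inner_eq_dot, real_inner_comm]; exact hphW x hx
    rw [hQ, ← Matrix.mulVec_mulVec, reflM_mulVec_of_orth _ _ h1, reflM_mulVec_of_orth _ _ h2]
  have hQp : Q.mulVec p = -p := by
    rw [hQ, ← Matrix.mulVec_mulVec, reflM_mulVec_of_orth _ _ hwpdot, reflM_mulVec]
    have hdot : (ph : Fin d → ℝ) ⬝ᵥ (p : Fin d → ℝ) = ‖p‖ := by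
      rw [← inner_eq_dot, hph, real_inner_smul_left, real_inner_self_eq_norm_sq]
      field_simp
    rw [hdot, hph]
    have : (2 * ‖p‖ : ℝ) • (‖p‖⁻¹ • p) = (2 : ℝ) • p := by
      rw [smul_smul]
      congr 1
      field_simp
    rw [← WithLp.ofLp_smul, this, WithLp.ofLp_smul]
    module
  have key : h v = Q.mulVec (h v) := by
    have hv : (fun i => Q.mulVec (v i)) = v :=
      funext fun i => hfix (WithLp.toLp 2 (v i)) (Submodule.subset_span (Set.mem_range_self i))
    rw [← hh Q hQorth hQdet v, hv]
  have hhv : WithLp.toLp 2 (h v) = a + p := by rw [hp]; abel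
  have hfin2 : a + p = a + -p := by
    apply WithLp.ofLp_injective 2
    simp only [WithLp.ofLp_add, WithLp.ofLp_neg]
    calc a.ofLp + p.ofLp = h v := by rw [← WithLp.ofLp_add, ← hhv]
      _ = Q.mulVec (h v) := key
      _ = Q.mulVec a.ofLp + Q.mulVec p.ofLp := by
          rw [show (h v : Fin d → ℝ) = a.ofLp + p.ofLp by rw [← WithLp.ofLp_add, ← hhv]]
          exact Matrix.mulVec_add Q _ _
      _ = a.ofLp + -p.ofLp := by rw [hfix a (W.orthogonalProjectionOnto (WithLp.toLp 2 (h v))).2, hQp]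
  have hpp : p = -p := add_left_cancel hfin2
  apply hp0
  have h2p : (2 : ℝ) • p = 0 := by
    rw [two_smul]
    nth_rewrite 1 [hpp]
    abel
  have := smul_eq_zero.mp h2p
  rcases this with hc | hc
  · norm_num at hc
  · exact hc
end

section
/- Let h : (ℝ^d)^n → ℝ^d be both translation-invariant (h(v₁+w,...,vₙ+w) = h(v₁,...,vₙ)) and O(d)-equivariant. Then there exist O(d)- and translation-invariant scalar functions f₁,...,fₙ with h(v₁,...,vₙ) = Σₜ fₜ(v₁,...,vₙ)vₜ and Σₜ fₜ(v₁,...,vₙ) = 0 for all inputs. -/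
open Matrix

/-- Any linear isometry equivalence of Euclidean space is given by an orthogonal matrix. -/
lemma exists_orth_matrix {d : ℕ}
    (φ : EuclideanSpace ℝ (Fin d) ≃ₗᵢ[ℝ] EuclideanSpace ℝ (Fin d)) :
    ∃ Q ∈ Matrix.orthogonalGroup (Fin d) ℝ, ∀ x : EuclideanSpace ℝ (Fin d), Q.mulVec x = (φ x : Fin d → ℝ) := by
  set F : (Fin d → ℝ) →ₗ[ℝ] (Fin d → ℝ) :=
    (WithLp.linearEquiv 2 ℝ (Fin d → ℝ)).toLinearMap ∘ₗ φ.toLinearEquiv.toLinearMap ∘ₗ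
      (WithLp.linearEquiv 2 ℝ (Fin d → ℝ)).symm.toLinearMap
  have e : ∀ (i : Fin d), F (fun j' => if j' = i then 1 else 0)
      = φ (WithLp.toLp 2 (fun j' => if j' = i then 1 else 0)) := fun _ => rfl
  refine ⟨LinearMap.toMatrix' F, ?_, ?_⟩
  · have key : star (LinearMap.toMatrix' F) * (LinearMap.toMatrix' F) = 1 := by
      ext i j
      have h1 : (star (LinearMap.toMatrix' F) * (LinearMap.toMatrix' F)) i j
          = ∑ k, (LinearMap.toMatrix' F) k i * (LinearMap.toMatrix' F) k j := by
        simp [Matrix.mul_apply, Matrix.star_apply, mul_comm]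
      rw [h1]
      have inner_eq : @inner ℝ (EuclideanSpace ℝ (Fin d)) _
            (φ (WithLp.toLp 2 (fun j' => if j' = i then (1:ℝ) else 0)))
            (φ (WithLp.toLp 2 (fun j' => if j' = j then (1:ℝ) else 0)))
          = @inner ℝ (EuclideanSpace ℝ (Fin d)) _
            (WithLp.toLp 2 (fun j' => if j' = i then (1:ℝ) else 0))
            (WithLp.toLp 2 (fun j' => if j' = j then (1:ℝ) else 0)) :=
        φ.inner_map_map _ _
      have lhs : ∑ k, (LinearMap.toMatrix' F) k i * (LinearMap.toMatrix' F) k j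
          = @inner ℝ (EuclideanSpace ℝ (Fin d)) _
              (φ (WithLp.toLp 2 (fun j' => if j' = i then (1:ℝ) else 0)))
              (φ (WithLp.toLp 2 (fun j' => if j' = j then (1:ℝ) else 0))) := by
        have e' : ∀ i, F (Pi.single i 1)
            = (φ (WithLp.toLp 2 fun j' => if j' = i then (1:ℝ) else 0)).ofLp := fun i => by
          rw [← e]; congr 1; ext j'; simp [Pi.single_apply]
        simp only [LinearMap.toMatrix'_apply, e]
        rw [PiLp.inner_apply]
        simp [RCLike.inner_apply, mul_comm]
        simp only [e']
      rw [lhs, inner_eq, PiLp.inner_apply]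
      simp only [RCLike.inner_apply, starRingEnd_apply, star_trivial]
      by_cases hij : i = j
      · subst hij
        simp [Matrix.one_apply]
      · rw [Matrix.one_apply_ne hij]
        rw [Finset.sum_eq_zero]
        intro k _
        by_cases hk : k = i
        · simp [hk, Ne.symm hij, hij]
        · simp [hk]
    exact ⟨key, mul_eq_one_comm.mp key⟩
  · intro x
    have h2 := Matrix.toLin'_toMatrix' F
    calc (LinearMap.toMatrix' F).mulVec x = Matrix.toLin' (LinearMap.toMatrix' F) x := by
          rw [Matrix.toLin'_apply]
      _ = F x := by rw [h2]
      _ = φ x := rfl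

lemma neg_one_mem_orth (d : ℕ) :
    (-1 : Matrix (Fin d) (Fin d) ℝ) ∈ Matrix.orthogonalGroup (Fin d) ℝ := by
  constructor <;> simp

/-- Existence of coefficients summing to zero. -/
lemma exists_coeffs (d n : ℕ)
    (h : (Fin n → Fin d → ℝ) → Fin d → ℝ)
    (htrans : ∀ (w : Fin d → ℝ) (v : Fin n → Fin d → ℝ), h (fun i => v i + w) = h v)
    (hQ : ∀ Q : Matrix (Fin d) (Fin d) ℝ, Q ∈ Matrix.orthogonalGroup (Fin d) ℝ →
      ∀ v : Fin n → Fin d → ℝ, h (fun i => Q.mulVec (v i)) = Q.mulVec (h v))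
    (v : Fin n → Fin d → ℝ) :
    ∃ c : Fin n → ℝ, (∑ t, c t = 0) ∧ h v = ∑ t, c t • v t := by
  rcases Nat.eq_zero_or_pos n with hn | hn
  · subst hn
    refine ⟨fun i => i.elim0, by simp, ?_⟩
    have h1 := hQ (-1) (neg_one_mem_orth d) v
    have h2 : (fun i => (-1 : Matrix (Fin d) (Fin d) ℝ).mulVec (v i)) = v := by
      funext i
      exact i.elim0
    rw [h2, Matrix.neg_mulVec, Matrix.one_mulVec] at h1
    have h0 : h v = 0 := by
      funext k
      have := congrFun h1 k
      simp only [Pi.neg_apply] at this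
      simp only [Pi.zero_apply]
      linarith
    rw [h0]
    simp
  · haveI : NeZero n := ⟨hn.ne'⟩
    set u : Fin n → Fin d → ℝ := fun i => v i - v 0 with hu
    have huv : h u = h v := by
      rw [← htrans (-(v 0)) v]
      congr 1
    obtain ⟨Q, hQmem, hQeq⟩ := exists_orth_matrix
      (Submodule.reflection (Submodule.span ℝ (Set.range (fun i => WithLp.toLp 2 (u i)))))
    have hfix0 : ∀ i, Q.mulVec (u i) = u i := fun i =>
      (hQeq (WithLp.toLp 2 (u i))).trans (congrArg WithLp.ofLp
        (Submodule.reflection_mem_subspace_eq_self (𝕜 := ℝ) (E := EuclideanSpace ℝ (Fin d)) (Submodule.subset_span ⟨i, rfl⟩)))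
    have hfix : (fun i => Q.mulVec (u i)) = u := funext fun i => hfix0 i
    have hrefl : Submodule.reflection (Submodule.span ℝ (Set.range (fun i => WithLp.toLp 2 (u i))))
        (WithLp.toLp 2 (h u)) = WithLp.toLp 2 (h u) := by
      have h3 := hQ Q hQmem u
      rw [hfix] at h3
      apply WithLp.ofLp_injective 2
      rw [← hQeq]
      exact h3.symm
    have hhu : WithLp.toLp 2 (h u) ∈ Submodule.span ℝ (Set.range (fun i => WithLp.toLp 2 (u i))) :=
      (Submodule.reflection_eq_self_iff _).mp hrefl
    obtain ⟨a, ha⟩ := Submodule.mem_span_range_iff_exists_fun ℝ |>.mp hhu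
    have ha' : ∑ i, a i • (v i - v 0) = h v := by
      have : (∑ i, a i • (v i - v 0) : Fin d → ℝ) = WithLp.ofLp (∑ i, a i • WithLp.toLp 2 (u i)) := by
        rw [WithLp.ofLp_sum]; rfl
      rw [this, ha]
      exact huv
    refine ⟨fun i => a i - (if i = 0 then ∑ t, a t else 0), ?_, ?_⟩
    · rw [Finset.sum_sub_distrib]
      simp
    · have key : ∀ i : Fin n, (a i - (if i = 0 then ∑ t, a t else 0)) • v i
          = a i • (v i - v 0) + (a i • v 0 - (if i = 0 then (∑ t, a t) • v i else 0)) := by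
        intro i
        by_cases hi : i = 0 <;> simp [hi, sub_smul, smul_sub]
      rw [Finset.sum_congr rfl fun i _ => key i, Finset.sum_add_distrib,
        Finset.sum_sub_distrib, ← Finset.sum_smul, Finset.sum_ite_eq' Finset.univ (0 : Fin n)]
      simp [ha']


/-- The linear map sending coefficients `c` to `(∑ cₜ • vₜ, ∑ cₜ)`. -/
noncomputable def coeffMap (d n : ℕ) (v : Fin n → Fin d → ℝ) :
    EuclideanSpace ℝ (Fin n) →ₗ[ℝ] ((Fin d → ℝ) × ℝ) where
  toFun c := (∑ t, c t • v t, ∑ t, c t)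
  map_add' a b := by
    refine Prod.ext ?_ ?_ <;>
      simp [PiLp.add_apply, add_smul, Finset.sum_add_distrib]
  map_smul' r a := by
    refine Prod.ext ?_ ?_ <;>
      simp [PiLp.smul_apply, smul_smul, Finset.smul_sum, Finset.mul_sum]

lemma coeffMap_apply (d n : ℕ) (v : Fin n → Fin d → ℝ) (c : EuclideanSpace ℝ (Fin n)) :
    coeffMap d n v c = (∑ t, c t • v t, ∑ t, c t) := rfl

lemma mulVec_inj {d : ℕ} {Q : Matrix (Fin d) (Fin d) ℝ}
    (hQmem : Q ∈ Matrix.orthogonalGroup (Fin d) ℝ) {x y : Fin d → ℝ}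
    (hxy : Q.mulVec x = Q.mulVec y) : x = y := by
  have h1 := congrArg (star Q).mulVec hxy
  rwa [Matrix.mulVec_mulVec, Matrix.mulVec_mulVec, (Unitary.mem_iff.mp hQmem).1,
    Matrix.one_mulVec, Matrix.one_mulVec] at h1

lemma sum_smul_add {d n : ℕ} (c : Fin n → ℝ) (v : Fin n → Fin d → ℝ) (w : Fin d → ℝ) :
    ∑ t, c t • (v t + w) = ∑ t, c t • v t + (∑ t, c t) • w := by
  rw [Finset.sum_smul, ← Finset.sum_add_distrib]
  congr 1
  funext t
  rw [smul_add]

lemma sum_smul_mulVec {d n : ℕ} (c : Fin n → ℝ) (v : Fin n → Fin d → ℝ)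
    (Q : Matrix (Fin d) (Fin d) ℝ) :
    ∑ t, c t • Q.mulVec (v t) = Q.mulVec (∑ t, c t • v t) := by
  show ∑ t, c t • Q.mulVecLin (v t) = Q.mulVecLin (∑ t, c t • v t)
  rw [map_sum]
  congr 1
  funext t
  exact (LinearMap.map_smul Q.mulVecLin (c t) (v t)).symm

lemma ker_translate (d n : ℕ) (v : Fin n → Fin d → ℝ) (w : Fin d → ℝ) :
    LinearMap.ker (coeffMap d n (fun i => v i + w)) = LinearMap.ker (coeffMap d n v) := by
  ext c
  simp only [LinearMap.mem_ker, coeffMap_apply, Prod.mk_eq_zero]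
  rw [sum_smul_add]
  constructor
  · rintro ⟨h1, h2⟩
    rw [h2, zero_smul, add_zero] at h1
    exact ⟨h1, h2⟩
  · rintro ⟨h1, h2⟩
    exact ⟨by rw [h2, zero_smul, add_zero]; exact h1, h2⟩

lemma ker_rotate (d n : ℕ) (v : Fin n → Fin d → ℝ) (Q : Matrix (Fin d) (Fin d) ℝ)
    (hQmem : Q ∈ Matrix.orthogonalGroup (Fin d) ℝ) :
    LinearMap.ker (coeffMap d n (fun i => Q.mulVec (v i))) = LinearMap.ker (coeffMap d n v) := by
  ext c
  simp only [LinearMap.mem_ker, coeffMap_apply, Prod.mk_eq_zero]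
  rw [sum_smul_mulVec]
  constructor
  · rintro ⟨h1, h2⟩
    refine ⟨mulVec_inj hQmem ?_, h2⟩
    rw [h1, Matrix.mulVec_zero]
  · rintro ⟨h1, h2⟩
    exact ⟨by rw [h1, Matrix.mulVec_zero], h2⟩

lemma proj_congr {n : ℕ} (K K' : Submodule ℝ (EuclideanSpace ℝ (Fin n))) (hKK : K = K')
    (c : EuclideanSpace ℝ (Fin n)) :
    c - (Submodule.orthogonalProjection K c : EuclideanSpace ℝ (Fin n))
      = c - (Submodule.orthogonalProjection K' c : EuclideanSpace ℝ (Fin n)) := by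
  subst hKK
  rfl

lemma proj_welldef {n : ℕ} (K : Submodule ℝ (EuclideanSpace ℝ (Fin n)))
    (c c' : EuclideanSpace ℝ (Fin n)) (hcc : c - c' ∈ K) :
    c - (Submodule.orthogonalProjection K c : EuclideanSpace ℝ (Fin n))
      = c' - (Submodule.orthogonalProjection K c' : EuclideanSpace ℝ (Fin n)) := by
  have h1 : (Submodule.orthogonalProjection K (c - c') : EuclideanSpace ℝ (Fin n)) = c - c' :=
    Submodule.starProjection_eq_self_iff.mpr hcc
  have h2 : (Submodule.orthogonalProjection K c : EuclideanSpace ℝ (Fin n))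
      - (Submodule.orthogonalProjection K c' : EuclideanSpace ℝ (Fin n)) = c - c' := by
    rw [← Submodule.coe_sub, ← map_sub, h1]
  rw [sub_eq_sub_iff_sub_eq_sub]
  exact h2.symm

/-- A translation-invariant, O(d)-equivariant vector function is a
combination of the inputs with O(d)- and translation-invariant scalar coefficients
summing to 0. -/
theorem translation_invariant_od_equivariant (d n : ℕ)
    (h : (Fin n → Fin d → ℝ) → Fin d → ℝ)
    (htrans : ∀ (w : Fin d → ℝ) (v : Fin n → Fin d → ℝ), h (fun i => v i + w) = h v)
    (hQ : ∀ Q : Matrix (Fin d) (Fin d) ℝ, Q ∈ Matrix.orthogonalGroup (Fin d) ℝ →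
      ∀ v : Fin n → Fin d → ℝ, h (fun i => Q.mulVec (v i)) = Q.mulVec (h v)) :
    ∃ f : Fin n → ((Fin n → Fin d → ℝ) → ℝ),
      (∀ t, ∀ Q : Matrix (Fin d) (Fin d) ℝ, Q ∈ Matrix.orthogonalGroup (Fin d) ℝ →
        ∀ v : Fin n → Fin d → ℝ, f t (fun i => Q.mulVec (v i)) = f t v) ∧
      (∀ t, ∀ (w : Fin d → ℝ) (v : Fin n → Fin d → ℝ), f t (fun i => v i + w) = f t v) ∧
      (∀ v : Fin n → Fin d → ℝ, h v = ∑ t, f t v • v t) ∧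
      (∀ v : Fin n → Fin d → ℝ, ∑ t, f t v = 0) := by
  classical
  choose c0 hsum0 hdecomp0 using exists_coeffs d n h htrans hQ
  let c0' : (Fin n → Fin d → ℝ) → EuclideanSpace ℝ (Fin n) := fun v => WithLp.toLp 2 (c0 v)
  set g : (Fin n → Fin d → ℝ) → EuclideanSpace ℝ (Fin n) := fun v =>
    c0' v
      - (Submodule.orthogonalProjection (LinearMap.ker (coeffMap d n v)) (c0' v)
          : EuclideanSpace ℝ (Fin n)) with hg
  have hmemker : ∀ (v : Fin n → Fin d → ℝ) (c : EuclideanSpace ℝ (Fin n)),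
      (∑ t, c t = 0) → h v = ∑ t, c t • v t →
      c0' v - c ∈ LinearMap.ker (coeffMap d n v) := by
    intro v c hc1 hc2
    rw [LinearMap.mem_ker, map_sub, coeffMap_apply, coeffMap_apply]
    rw [← hc2, ← hdecomp0 v, hc1, hsum0 v]
    simp
  have welldef : ∀ (v : Fin n → Fin d → ℝ) (c : EuclideanSpace ℝ (Fin n)),
      (∑ t, c t = 0) → h v = ∑ t, c t • v t →
      g v = c - (Submodule.orthogonalProjection (LinearMap.ker (coeffMap d n v)) c
                  : EuclideanSpace ℝ (Fin n)) := by
    intro v c hc1 hc2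
    exact proj_welldef _ _ _ (hmemker v c hc1 hc2)
  have hgP : ∀ v : Fin n → Fin d → ℝ, (∑ t, (g v) t = 0) ∧ h v = ∑ t, (g v) t • v t := by
    intro v
    have hk : (Submodule.orthogonalProjection (LinearMap.ker (coeffMap d n v)) (c0' v)
        : EuclideanSpace ℝ (Fin n)) ∈ LinearMap.ker (coeffMap d n v) :=
      SetLike.coe_mem _
    rw [LinearMap.mem_ker] at hk
    have h1 : coeffMap d n v (g v) = (h v, 0) := by
      rw [hg, map_sub, hk, sub_zero, coeffMap_apply, ← hdecomp0 v, hsum0 v]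
    rw [coeffMap_apply] at h1
    have h2 := congrArg Prod.fst h1
    have h3 := congrArg Prod.snd h1
    exact ⟨h3, h2.symm⟩
  refine ⟨fun t v => (g v) t, ?_, ?_, ?_, ?_⟩
  · intro t Q hQmem v
    have key : g (fun i => Q.mulVec (v i)) = g v := by
      have hc1 : ∑ s, c0 (fun i => Q.mulVec (v i)) s = 0 := hsum0 _
      have hc2 : h v = ∑ s, c0 (fun i => Q.mulVec (v i)) s • v s := by
        apply mulVec_inj hQmem
        rw [← hQ Q hQmem v, ← sum_smul_mulVec]
        exact hdecomp0 _
      have e0 : g (fun i => Q.mulVec (v i))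
          = c0' (fun i => Q.mulVec (v i))
            - (Submodule.orthogonalProjection (LinearMap.ker (coeffMap d n (fun i => Q.mulVec (v i))))
                (c0' (fun i => Q.mulVec (v i))) : EuclideanSpace ℝ (Fin n)) :=
        congrFun hg _
      have e1 := e0.trans (proj_congr _ _ (ker_rotate d n v Q hQmem) _)
      rw [e1, ← welldef v _ hc1 hc2]
    exact congrFun (congrArg WithLp.ofLp key) t
  · intro t w v
    have key : g (fun i => v i + w) = g v := by
      have hc1 : ∑ s, c0 (fun i => v i + w) s = 0 := hsum0 _
      have hc2 : h v = ∑ s, c0 (fun i => v i + w) s • v s := by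
        rw [← htrans w v, hdecomp0 (fun i => v i + w), sum_smul_add, hc1, zero_smul, add_zero]
      have e0 : g (fun i => v i + w)
          = c0' (fun i => v i + w)
            - (Submodule.orthogonalProjection (LinearMap.ker (coeffMap d n (fun i => v i + w)))
                (c0' (fun i => v i + w)) : EuclideanSpace ℝ (Fin n)) :=
        congrFun hg _
      have e1 := e0.trans (proj_congr _ _ (ker_translate d n v w) _)
      rw [e1, ← welldef v _ hc1 hc2]
    exact congrFun (congrArg WithLp.ofLp key) t
  · intro v
    exact (hgP v).2
  · intro v
    exact (hgP v).1
end

section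
/- Let h : (ℝ^d)^n → ℝ^d be O(d)-equivariant and permutation-invariant, i.e., h(v_{σ(1)},...,v_{σ(n)}) = h(v₁,...,vₙ) for all σ ∈ Sₙ. Then there exists a single O(d)-invariant scalar function f : (ℝ^d)^n → ℝ, symmetric in its last n-1 arguments, such that h(v₁,...,vₙ) = Σ_{t=1}^n f(vₜ, v₁,...,v_{t-1},v_{t+1},...,vₙ) · vₜ. -/
open Matrix

open scoped Classical in
/-- Canonical solution of a linear system, if one exists. -/
noncomputable def solveLin {m : ℕ} (G : Matrix (Fin m) (Fin m) ℝ) (b : Fin m → ℝ) :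
    Fin m → ℝ :=
  if hex : ∃ c, G.mulVec c = b then hex.choose else 0

open scoped Classical in
lemma solveLin_spec {m : ℕ} {G : Matrix (Fin m) (Fin m) ℝ} {b : Fin m → ℝ}
    (hex : ∃ c, G.mulVec c = b) : G.mulVec (solveLin G b) = b := by
  rw [solveLin, dif_pos hex]; exact hex.choose_spec

lemma sum_dotProduct' {m d : ℕ} (w : Fin m → Fin d → ℝ) (u : Fin d → ℝ) :
    dotProduct (∑ t, w t) u = ∑ t, dotProduct (w t) u := by
  simp only [dotProduct, Finset.sum_apply, Finset.sum_mul]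
  exact Finset.sum_comm

/-- Every linear isometry equivalence of Euclidean space is given by an orthogonal matrix. -/
lemma exists_orthogonal_matrix (d : ℕ)
    (L : EuclideanSpace ℝ (Fin d) ≃ₗᵢ[ℝ] EuclideanSpace ℝ (Fin d)) :
    ∃ Q ∈ Matrix.orthogonalGroup (Fin d) ℝ,
      ∀ x : Fin d → ℝ, Q.mulVec x = (L (WithLp.toLp 2 x)).ofLp := by
  classical
  set Lp : (Fin d → ℝ) →ₗ[ℝ] (Fin d → ℝ) :=
    { toFun := fun x => (L (WithLp.toLp 2 x)).ofLp
      map_add' := fun x y => by simp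
      map_smul' := fun c x => by simp } with hLp
  set Q : Matrix (Fin d) (Fin d) ℝ := LinearMap.toMatrix' Lp with hQdef
  have hmul : ∀ x : Fin d → ℝ, Q.mulVec x = (L (WithLp.toLp 2 x)).ofLp := by
    intro x
    have h1 : Matrix.toLin' Q x = Lp x := by rw [hQdef, Matrix.toLin'_toMatrix']
    rw [← Matrix.toLin'_apply, h1]
    rfl
  refine ⟨Q, ?_, hmul⟩
  rw [Matrix.mem_orthogonalGroup_iff']
  ext i j
  have hcol : ∀ (a : Fin d) (k : Fin d), Q k a = L (WithLp.toLp 2 (Pi.single a 1)) k := by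
    intro a k
    have := congrFun (hmul (Pi.single a 1)) k
    rw [Matrix.mulVec_single] at this
    simpa using this
  have h1 : (Qᵀ * Q) i j = ∑ k, Q k i * Q k j := by
    simp only [Matrix.mul_apply, Matrix.transpose_apply]
  have h2 : ∑ k, Q k i * Q k j
      = (inner ℝ (L (WithLp.toLp 2 (Pi.single i 1))) (L (WithLp.toLp 2 (Pi.single j 1))) : ℝ) := by
    rw [PiLp.inner_apply]
    simp [hcol, RCLike.inner_apply]
    exact Finset.sum_congr rfl fun _ _ => mul_comm _ _
  rw [h1, h2, LinearIsometryEquiv.inner_map_map, PiLp.inner_apply]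
  simp [Pi.single_apply, Matrix.one_apply, RCLike.inner_apply, eq_comm]

/-- An O(d)-equivariant, permutation-invariant vector function of n+1
vectors is a combination of the inputs with a single O(d)-invariant coefficient
function that is symmetric in its last n arguments. -/
theorem permutation_invariant_od_equivariant (d n : ℕ)
    (h : (Fin (n + 1) → Fin d → ℝ) → Fin d → ℝ)
    (hQ : ∀ Q : Matrix (Fin d) (Fin d) ℝ, Q ∈ Matrix.orthogonalGroup (Fin d) ℝ →
      ∀ v : Fin (n + 1) → Fin d → ℝ, h (fun i => Q.mulVec (v i)) = Q.mulVec (h v))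
    (hperm : ∀ σ : Equiv.Perm (Fin (n + 1)), ∀ v : Fin (n + 1) → Fin d → ℝ,
      h (v ∘ σ) = h v) :
    ∃ f : (Fin d → ℝ) → (Fin n → Fin d → ℝ) → ℝ,
      (∀ Q : Matrix (Fin d) (Fin d) ℝ, Q ∈ Matrix.orthogonalGroup (Fin d) ℝ →
        ∀ (w : Fin d → ℝ) (ws : Fin n → Fin d → ℝ),
          f (Q.mulVec w) (fun j => Q.mulVec (ws j)) = f w ws) ∧
      (∀ τ : Equiv.Perm (Fin n), ∀ (w : Fin d → ℝ) (ws : Fin n → Fin d → ℝ),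
        f w (ws ∘ τ) = f w ws) ∧
      (∀ v : Fin (n + 1) → Fin d → ℝ,
        h v = ∑ t, f (v t) (fun j => v (t.succAbove j)) • v t) := by
  classical
  -- Step 1: h v lies in the span of the inputs.
  have hspan : ∀ v : Fin (n + 1) → Fin d → ℝ,
      ∃ c : Fin (n + 1) → ℝ, ∑ i, c i • v i = h v := by
    intro v
    set v' : Fin (n + 1) → EuclideanSpace ℝ (Fin d) := fun i => WithLp.toLp 2 (v i) with hv'
    set W : Submodule ℝ (EuclideanSpace ℝ (Fin d)) := Submodule.span ℝ (Set.range v') with hW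
    obtain ⟨Q, hmem, hmul⟩ := exists_orthogonal_matrix d (Submodule.reflection W)
    have hfix : ∀ i, Q.mulVec (v i) = v i := by
      intro i
      have hr : (Submodule.reflection W) (v' i) = v' i :=
        Submodule.reflection_mem_subspace_eq_self (Submodule.subset_span ⟨i, rfl⟩)
      rw [hmul]
      exact congrArg WithLp.ofLp hr
    have h2 : Q.mulVec (h v) = h v := by
      rw [← hQ Q hmem v]
      have : (fun i => Q.mulVec (v i)) = v := funext hfix
      rw [this]
    have h3 : WithLp.toLp 2 (h v) ∈ W := by
      rw [← Submodule.reflection_eq_self_iff (K := W) (WithLp.toLp 2 (h v))]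
      exact congrArg (WithLp.toLp 2) ((hmul (h v)).symm.trans h2)
    obtain ⟨c, hc⟩ := (Submodule.mem_span_range_iff_exists_fun ℝ).mp h3
    exact ⟨c, by simpa [hv'] using congrArg WithLp.ofLp hc⟩
  -- Canonical coefficients via the Gram system.
  set Gram : (Fin (n + 1) → Fin d → ℝ) → Matrix (Fin (n + 1)) (Fin (n + 1)) ℝ :=
    fun v => Matrix.of fun s t => v s ⬝ᵥ v t with hGram
  set bv : (Fin (n + 1) → Fin d → ℝ) → Fin (n + 1) → ℝ :=
    fun v s => v s ⬝ᵥ h v with hbv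
  set cf : (Fin (n + 1) → Fin d → ℝ) → Fin (n + 1) → ℝ :=
    fun v => solveLin (Gram v) (bv v) with hcf
  have hex : ∀ v, ∃ c, (Gram v).mulVec c = bv v := by
    intro v
    obtain ⟨a, ha⟩ := hspan v
    refine ⟨a, ?_⟩
    funext s
    simp only [hGram, hbv, Matrix.mulVec, dotProduct, Matrix.of_apply]
    rw [← ha]
    simp only [Finset.sum_apply, Pi.smul_apply, smul_eq_mul, Finset.mul_sum, Finset.sum_mul]
    rw [Finset.sum_comm]
    apply Finset.sum_congr rfl
    intro k _
    apply Finset.sum_congr rfl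
    intro t _
    ring
  have hGc : ∀ v, (Gram v).mulVec (cf v) = bv v := fun v => solveLin_spec (hex v)
  -- Reconstruction: the canonical coefficients rebuild h v.
  have hrecon : ∀ v, ∑ t, cf v t • v t = h v := by
    intro v
    obtain ⟨a, ha⟩ := hspan v
    set u : Fin d → ℝ := (∑ t, cf v t • v t) - h v with hu
    have horth : ∀ s, v s ⬝ᵥ u = 0 := by
      intro s
      have hG := congrFun (hGc v) s
      simp only [hGram, hbv, Matrix.mulVec, dotProduct, Matrix.of_apply] at hG
      simp only [hu, dotProduct, Pi.sub_apply, Finset.sum_apply, Pi.smul_apply,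
        smul_eq_mul, mul_sub, Finset.sum_sub_distrib, Finset.mul_sum]
      rw [sub_eq_zero, ← hG, Finset.sum_comm]
      apply Finset.sum_congr rfl
      intro t _
      rw [Finset.sum_mul]
      apply Finset.sum_congr rfl
      intro k _
      ring
    have hu2 : u = ∑ t, (cf v t - a t) • v t := by
      rw [hu, ← ha, ← Finset.sum_sub_distrib]
      apply Finset.sum_congr rfl
      intro t _
      rw [sub_smul]
    have hud : u ⬝ᵥ u = 0 := by
      nth_rewrite 1 [hu2]
      rw [sum_dotProduct']
      apply Finset.sum_eq_zero
      intro t _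
      rw [smul_dotProduct, horth t, smul_zero]
    have hu0 : u = 0 := dotProduct_self_eq_zero.mp hud
    have := sub_eq_zero.mp (hu ▸ hu0)
    exact this
  -- O(d)-invariance of the canonical coefficients.
  have hkey : ∀ Q : Matrix (Fin d) (Fin d) ℝ, Q ∈ Matrix.orthogonalGroup (Fin d) ℝ →
      ∀ x y : Fin d → ℝ, (Q.mulVec x) ⬝ᵥ (Q.mulVec y) = x ⬝ᵥ y := by
    intro Q hm x y
    have hQt : star Q * Q = 1 := (Matrix.mem_orthogonalGroup_iff' (Fin d) ℝ).mp hm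
    have hst : Qᵀ = star Q := by
      ext i j; simp [Matrix.star_apply]
    rw [dotProduct_mulVec, ← Matrix.mulVec_transpose, hst,
      Matrix.mulVec_mulVec, hQt, Matrix.one_mulVec]
  have hcfQ : ∀ Q : Matrix (Fin d) (Fin d) ℝ, Q ∈ Matrix.orthogonalGroup (Fin d) ℝ →
      ∀ v : Fin (n + 1) → Fin d → ℝ, cf (fun i => Q.mulVec (v i)) = cf v := by
    intro Q hm v
    have hG : Gram (fun i => Q.mulVec (v i)) = Gram v := by
      ext s t
      simp only [hGram, Matrix.of_apply]
      exact hkey Q hm (v s) (v t)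
    have hb : bv (fun i => Q.mulVec (v i)) = bv v := by
      funext s
      simp only [hbv]
      rw [hQ Q hm v]
      exact hkey Q hm (v s) (h v)
    simp only [hcf]
    rw [hG, hb]
  -- Definition of f by symmetrisation.
  set N : ℝ := (Nat.factorial (n + 1) : ℝ) with hN
  have hN0 : N ≠ 0 := Nat.cast_ne_zero.mpr (Nat.factorial_ne_zero _)
  set f : (Fin d → ℝ) → (Fin n → Fin d → ℝ) → ℝ :=
    fun w ws => N⁻¹ * ∑ σ : Equiv.Perm (Fin (n + 1)),
      cf (Fin.cons w ws ∘ σ) (σ⁻¹ 0) with hf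
  refine ⟨f, ?_, ?_, ?_⟩
  · -- O(d) invariance
    intro Q hm w ws
    have hcons : (Fin.cons (Q.mulVec w) (fun j => Q.mulVec (ws j)) : Fin (n + 1) → Fin d → ℝ)
        = fun i => Q.mulVec ((Fin.cons w ws : Fin (n + 1) → Fin d → ℝ) i) := by
      funext i
      induction i using Fin.cases with
      | zero => simp
      | succ j => simp
    simp only [hf, hcons]
    congr 1
    apply Finset.sum_congr rfl
    intro σ _
    exact congrFun (hcfQ Q hm (Fin.cons w ws ∘ σ)) (σ⁻¹ 0)
  · -- permutation symmetry in the last n arguments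
    intro τ w ws
    set τh : Equiv.Perm (Fin (n + 1)) := Equiv.Perm.decomposeFin.symm (0, τ) with hτh
    have hτ0 : τh 0 = 0 := Equiv.Perm.decomposeFin_symm_apply_zero 0 τ
    have hτinv : τh⁻¹ 0 = 0 := by
      rw [Equiv.Perm.inv_eq_iff_eq, hτ0]
    have hcons2 : (Fin.cons w (ws ∘ τ) : Fin (n + 1) → Fin d → ℝ)
        = (Fin.cons w ws : Fin (n + 1) → Fin d → ℝ) ∘ τh := by
      funext i
      induction i using Fin.cases with
      | zero => simp [hτ0]
      | succ j =>
        have hs : τh j.succ = (τ j).succ := by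
          rw [hτh, Equiv.Perm.decomposeFin_symm_apply_succ, Equiv.swap_self]
          rfl
        simp [hs]
    simp only [hf, hcons2]
    congr 1
    rw [← Equiv.sum_comp (Equiv.mulLeft τh)
      (fun ρ => cf ((Fin.cons w ws : Fin (n + 1) → Fin d → ℝ) ∘ ρ) (ρ⁻¹ 0))]
    apply Finset.sum_congr rfl
    intro σ _
    have hms : Equiv.mulLeft τh σ = τh * σ := rfl
    have h1 : ((Fin.cons w ws : Fin (n + 1) → Fin d → ℝ) ∘ ⇑τh) ∘ ⇑σ
        = (Fin.cons w ws : Fin (n + 1) → Fin d → ℝ) ∘ ⇑(τh * σ) := rfl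
    have h2 : ((τh * σ)⁻¹ : Equiv.Perm (Fin (n + 1))) 0 = σ⁻¹ 0 := by
      rw [_root_.mul_inv_rev, Equiv.Perm.mul_apply, hτinv]
    rw [hms, h2, ← h1]
  · -- the decomposition
    intro v
    have hconsT : ∀ t : Fin (n + 1),
        (Fin.cons (v t) (fun j => v (t.succAbove j)) : Fin (n + 1) → Fin d → ℝ)
          = v ∘ ⇑(t.cycleRange)⁻¹ := by
      intro t
      funext i
      induction i using Fin.cases with
      | zero =>
        simp only [Fin.cons_zero, Function.comp_apply]
        exact (congrArg v (Fin.cycleRange_symm_zero t)).symm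
      | succ j =>
        simp only [Fin.cons_succ, Function.comp_apply]
        exact (congrArg v (Fin.cycleRange_symm_succ t j)).symm
    have step1 : ∀ t : Fin (n + 1),
        ∑ σ : Equiv.Perm (Fin (n + 1)),
            cf ((v ∘ ⇑(t.cycleRange)⁻¹) ∘ ⇑σ) (σ⁻¹ 0) • v t
          = ∑ ρ : Equiv.Perm (Fin (n + 1)),
            cf (v ∘ ⇑ρ) (ρ⁻¹ t) • (v ∘ ⇑ρ) (ρ⁻¹ t) := by
      intro t
      rw [← Equiv.sum_comp (Equiv.mulLeft (t.cycleRange)⁻¹)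
        (fun ρ => cf (v ∘ ⇑ρ) (ρ⁻¹ t) • (v ∘ ⇑ρ) (ρ⁻¹ t))]
      apply Finset.sum_congr rfl
      intro σ _
      have hms : Equiv.mulLeft (t.cycleRange)⁻¹ σ = (t.cycleRange)⁻¹ * σ := rfl
      have h1 : (v ∘ ⇑(t.cycleRange)⁻¹) ∘ ⇑σ = v ∘ ⇑((t.cycleRange)⁻¹ * σ) := rfl
      have h2 : (((t.cycleRange)⁻¹ * σ)⁻¹ : Equiv.Perm (Fin (n + 1))) t = σ⁻¹ 0 := by
        rw [_root_.mul_inv_rev, inv_inv, Equiv.Perm.mul_apply, Fin.cycleRange_self]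
      have h3 : (v ∘ ⇑((t.cycleRange)⁻¹ * σ)) (σ⁻¹ 0) = v t := by
        rw [← h2]
        exact congrArg v (Equiv.apply_symm_apply _ t)
      rw [hms, h2, h3, ← h1]
    calc h v = N⁻¹ • (N • h v) := by
          rw [smul_smul, inv_mul_cancel₀ hN0, one_smul]
      _ = N⁻¹ • ∑ ρ : Equiv.Perm (Fin (n + 1)), h (v ∘ ⇑ρ) := by
          congr 1
          rw [Finset.sum_congr rfl (fun ρ _ => hperm ρ v), Finset.sum_const,
            Finset.card_univ, Fintype.card_perm, Fintype.card_fin, hN,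
            Nat.cast_smul_eq_nsmul]
      _ = N⁻¹ • ∑ ρ : Equiv.Perm (Fin (n + 1)), ∑ s, cf (v ∘ ⇑ρ) s • (v ∘ ⇑ρ) s := by
          congr 1
          exact Finset.sum_congr rfl fun ρ _ => (hrecon (v ∘ ⇑ρ)).symm
      _ = N⁻¹ • ∑ ρ : Equiv.Perm (Fin (n + 1)),
            ∑ t, cf (v ∘ ⇑ρ) (ρ⁻¹ t) • (v ∘ ⇑ρ) (ρ⁻¹ t) := by
          congr 1
          apply Finset.sum_congr rfl
          intro ρ _
          exact (Equiv.sum_comp (ρ⁻¹ : Equiv.Perm (Fin (n + 1)))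
            (fun s => cf (v ∘ ⇑ρ) s • (v ∘ ⇑ρ) s)).symm
      _ = N⁻¹ • ∑ t, ∑ ρ : Equiv.Perm (Fin (n + 1)),
            cf (v ∘ ⇑ρ) (ρ⁻¹ t) • (v ∘ ⇑ρ) (ρ⁻¹ t) := by
          rw [Finset.sum_comm]
      _ = ∑ t, f (v t) (fun j => v (t.succAbove j)) • v t := by
          rw [Finset.smul_sum]
          apply Finset.sum_congr rfl
          intro t _
          simp only [hf]
          rw [hconsT t, mul_smul, Finset.sum_smul, step1 t]
end
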